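/- The equation e^{κ E_2} - 1 = 1 - e^{-κ E_1} with E_1 ≥ E_2 > 0 has a unique positive solution κ*, and κ* ≤ (ln 2)/E_2. -/

import Mathlib

open Real Filter Set Topology

theorem unique_coding_transition (E₁ E₂ : ℝ) (hE₂ : 0 < E₂) (hE : E₂ < E₁) :
    (∃! κ : ℝ, 0 < κ ∧ Real.exp (κ * E₂) - 1 = 1 - Real.exp (-(κ * E₁))) ∧
    ∀ κ : ℝ, 0 < κ → Real.exp (κ * E₂) - 1 = 1 - Real.exp (-(κ * E₁)) →
      κ < Real.log 2 / E₂ := by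
  have hE₁ : 0 < E₁ := hE₂.trans hE
  set F : ℝ → ℝ := fun κ => Real.exp (κ * E₂) + Real.exp (-(κ * E₁)) with hF
  have hF0 : F 0 = 2 := by simp [hF]; norm_num
  -- strict convexity key inequality
  have key : ∀ b c : ℝ, 0 < c → c < b → F c < 2 * (1 - c/b) + (c/b) * F b := by
    intro b c hc hcb
    have hb : 0 < b := hc.trans hcb
    set s := c / b with hs
    have hs0 : 0 < s := div_pos hc hb
    have hs1 : s < 1 := (div_lt_one hb).2 hcb
    have hsb : s * b = c := div_mul_cancel₀ c hb.ne'
    have h1 := strictConvexOn_exp.2 (mem_univ (0:ℝ)) (mem_univ (b*E₂))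
      (ne_of_lt (mul_pos hb hE₂)) (by linarith : (0:ℝ) < 1 - s) hs0 (by ring)
    have h2 := strictConvexOn_exp.2 (mem_univ (0:ℝ)) (mem_univ (-(b*E₁)))
      (by nlinarith : (0:ℝ) ≠ -(b*E₁)) (by linarith : (0:ℝ) < 1 - s) hs0 (by ring)
    simp only [smul_eq_mul, mul_zero, zero_add, Real.exp_zero, mul_one] at h1 h2
    have e1 : s * (b * E₂) = c * E₂ := by rw [← hsb]; ring
    have e2 : s * -(b * E₁) = -(c * E₁) := by rw [← hsb]; ring
    rw [e1] at h1
    rw [e2] at h2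
    simp only [hF]
    calc Real.exp (c*E₂) + Real.exp (-(c*E₁))
        < ((1-s) + s * Real.exp (b*E₂)) + ((1-s) + s * Real.exp (-(b*E₁))) := by
          exact add_lt_add h1 h2
      _ = 2 * (1 - s) + s * (Real.exp (b*E₂) + Real.exp (-(b*E₁))) := by ring
  set L := Real.log 2 / E₂ with hL
  have hLpos : 0 < L := div_pos (Real.log_pos (by norm_num)) hE₂
  have hLE : L * E₂ = Real.log 2 := div_mul_cancel₀ _ hE₂.ne'
  have hFL : 2 < F L := by
    have : Real.exp (L * E₂) = 2 := by rw [hLE, Real.exp_log]; norm_num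
    simp only [hF, this]
    nlinarith [Real.exp_pos (-(L * E₁))]
  have hcont : Continuous F := by
    simp only [hF]; fun_prop
  -- derivative at 0 is negative, so F drops below 2 just right of 0
  have hd : HasDerivAt F (E₂ - E₁) 0 := by
    have h1 : HasDerivAt (fun κ : ℝ => Real.exp (κ * E₂)) E₂ 0 := by
      have := (hasDerivAt_mul_const (c := E₂) (x := (0:ℝ))).exp
      simpa using this
    have h2 : HasDerivAt (fun κ : ℝ => Real.exp (-(κ * E₁))) (-E₁) 0 := by
      have hm : HasDerivAt (fun κ : ℝ => -(κ * E₁)) (-E₁) 0 :=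
        (hasDerivAt_mul_const (c := E₁) (x := (0:ℝ))).neg
      have := hm.exp
      simpa using this
    have := h1.add h2
    rw [sub_eq_add_neg]; exact this
  have hslope : Tendsto (slope F 0) (𝓝[≠] 0) (𝓝 (E₂ - E₁)) :=
    hasDerivAt_iff_tendsto_slope.1 hd
  have hneg : ∀ᶠ t in 𝓝[≠] (0:ℝ), slope F 0 t < 0 :=
    hslope.eventually (gt_mem_nhds (by linarith : E₂ - E₁ < 0))
  have hneg' : ∀ᶠ t in 𝓝[>] (0:ℝ), slope F 0 t < 0 :=
    hneg.filter_mono (nhdsWithin_mono 0 (fun x hx => ne_of_gt hx))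
  have hmem : ∀ᶠ t in 𝓝[>] (0:ℝ), t < L :=
    eventually_nhdsWithin_of_eventually_nhds (gt_mem_nhds hLpos)
  have hself : ∀ᶠ t in 𝓝[>] (0:ℝ), 0 < t :=
    eventually_mem_nhdsWithin
  obtain ⟨t, ht1, ht2, ht3⟩ := (hneg'.and (hmem.and hself)).exists
  have htF : F t < 2 := by
    have : (F t - F 0) / (t - 0) < 0 := by
      simpa [slope_def_field, div_eq_iff] using ht1
    rw [hF0] at this
    have h' : F t - 2 < 0 := by
      by_contra h
      push_neg at h
      have := div_nonneg h (by linarith : (0:ℝ) ≤ t - 0)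
      linarith
    linarith
  -- existence via IVT on [t, L]
  obtain ⟨κ, hκmem, hκeq⟩ := intermediate_value_Icc (le_of_lt ht2) hcont.continuousOn
    (⟨le_of_lt htF, le_of_lt hFL⟩ : (2:ℝ) ∈ Icc (F t) (F L))
  have hκpos : 0 < κ := lt_of_lt_of_le ht3 hκmem.1
  -- uniqueness lemma: any two positive roots coincide
  have uniq : ∀ a b : ℝ, 0 < a → 0 < b → F a = 2 → F b = 2 → a = b := by
    intro a b ha hb hFa hFb
    rcases lt_trichotomy a b with h | h | h
    · exfalso
      have := key b a ha h
      rw [hFb] at this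
      have h2 : 2 * (1 - a/b) + (a/b) * 2 = 2 := by ring
      rw [h2] at this
      linarith [hFa]
    · exact h
    · exfalso
      have := key a b hb h
      rw [hFa] at this
      have h2 : 2 * (1 - b/a) + (b/a) * 2 = 2 := by ring
      rw [h2] at this
      linarith [hFb]
  have heqiff : ∀ x : ℝ, (Real.exp (x * E₂) - 1 = 1 - Real.exp (-(x * E₁))) ↔ F x = 2 := by
    intro x
    simp only [hF]
    constructor <;> intro h <;> linarith
  constructor
  · refine ⟨κ, ⟨hκpos, (heqiff κ).2 hκeq⟩, ?_⟩
    intro y ⟨hy, hyeq⟩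
    exact uniq y κ hy hκpos ((heqiff y).1 hyeq) hκeq
  · intro x hx hxeq
    have hFx : F x = 2 := (heqiff x).1 hxeq
    by_contra h
    push_neg at h
    rcases eq_or_lt_of_le h with h' | h'
    · rw [h'] at hFL; linarith
    · have := key x L hLpos h'
      rw [hFx] at this
      have h2 : 2 * (1 - L/x) + (L/x) * 2 = 2 := by ring
      rw [h2] at this
      linarith
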